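/- For every integer m ≥ 1 and every real p ∈ [0,1]: B(m; 2m+1, p) = B(m; 2m, p) − p · (2m choose m) · p^m (1−p)^m. In particular B(m; 2m+1, p) ≤ B(m; 2m, p) for all p ∈ [0,1]. -/
import Mathlib


/-- Binomial cumulative distribution function:
`B(k; N, p) = ∑_{i=0}^{k} (N choose i) p^i (1-p)^(N-i)`. -/
noncomputable def binCdf (k N : ℕ) (p : ℝ) : ℝ :=
  ∑ i ∈ Finset.range (k + 1), (N.choose i : ℝ) * p ^ i * (1 - p) ^ (N - i)

/-- `g_N(p) = B(⌊N/2⌋; N, p)`. -/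
noncomputable def gN (N : ℕ) (p : ℝ) : ℝ := binCdf (N / 2) N p

lemma binCdf_succ_eq (N : ℕ) (p : ℝ) : ∀ k, k ≤ N →
    binCdf k (N + 1) p = binCdf k N p - p * (N.choose k : ℝ) * p ^ k * (1 - p) ^ (N - k) := by
  intro k
  induction k with
  | zero =>
    intro _
    simp only [binCdf, zero_add, Finset.sum_range_one, Nat.choose_zero_right, Nat.cast_one,
      pow_zero, Nat.sub_zero, pow_succ]
    ring
  | succ k ih =>
    intro hk
    obtain ⟨j, hj⟩ : ∃ j, N - k = j + 1 := ⟨N - (k + 1), by omega⟩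
    have hj2 : N - (k + 1) = j := by omega
    have hch : ((N + 1).choose (k + 1) : ℝ) = (N.choose (k + 1) : ℝ) + (N.choose k : ℝ) := by
      rw [Nat.choose_succ_succ]; push_cast; ring
    have h1 : binCdf (k + 1) (N + 1) p =
        binCdf k (N + 1) p + ((N + 1).choose (k + 1) : ℝ) * p ^ (k + 1) * (1 - p) ^ (N - k) := by
      have he : N + 1 - (k + 1) = N - k := by omega
      simp only [binCdf, Finset.sum_range_succ, he]
    have h2 : binCdf (k + 1) N p =
        binCdf k N p + (N.choose (k + 1) : ℝ) * p ^ (k + 1) * (1 - p) ^ (N - (k + 1)) := by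
      simp only [binCdf, Finset.sum_range_succ]
    rw [h1, ih (by omega), h2, hch, hj, hj2, pow_succ, pow_succ]
    ring

theorem binCdf_odd_vs_even (m : ℕ) (hm : 1 ≤ m) (p : ℝ) (hp0 : 0 ≤ p) (hp1 : p ≤ 1) :
    binCdf m (2 * m + 1) p =
        binCdf m (2 * m) p - p * ((2 * m).choose m : ℝ) * p ^ m * (1 - p) ^ m ∧
      binCdf m (2 * m + 1) p ≤ binCdf m (2 * m) p := by
  have h := binCdf_succ_eq (2 * m) p m (by omega)
  have hsub : 2 * m - m = m := by omega
  rw [hsub] at h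
  refine ⟨h, ?_⟩
  rw [h]
  have : 0 ≤ p * ((2 * m).choose m : ℝ) * p ^ m * (1 - p) ^ m :=
    mul_nonneg (mul_nonneg (mul_nonneg hp0 (Nat.cast_nonneg _)) (pow_nonneg hp0 m))
      (pow_nonneg (by linarith) m)
  linarith
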